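/- Let N ∈ ℕ and let S be the (N+1)×(N+1) matrix (indices 0,…,N) with S_{i,i−1} = i/2 for 1 ≤ i ≤ N, S_{i,i+1} = (N−i)/2 for 0 ≤ i ≤ N−1, and all other entries zero. (1) If j ∈ {0,…,N} and v ∈ ℂ^{N+1} satisfies Sv = (N/2 − j)v, then the function F_j(y) := (√y)^{j}(√(1−y))^{N−j} v satisfies y(1−y)F_j'(y) + (1/2)(S − (N/2)I + NyI)F_j(y) = 0 for all y ∈ (0,1). (2) If v₀,…,v_N are nonzero vectors with Sv_j = (N/2 − j)v_j for each j, then the functions F₀,…,F_N form a basis of the space of solutions on (0,1) of the system y(1−y)F'(y) + (1/2)(S − (N/2)I + NyI)F(y) = 0: they are linearly independent and every solution is a linear combination of them. -/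

import Mathlib

open Matrix Set

/-- Entrywise derivative of a vector-valued function on `ℝ`. -/
noncomputable def vderiv {n : ℕ} (F : ℝ → (Fin n → ℂ)) : ℝ → (Fin n → ℂ) :=
  fun y i => deriv (fun t => F t i) y

/-- The tridiagonal matrix `S` with `S_{i,i−1} = i/2`, `S_{i,i+1} = (N−i)/2`. -/
noncomputable def Smat (N : ℕ) : Matrix (Fin (N + 1)) (Fin (N + 1)) ℂ :=
  Matrix.of fun (i j : Fin (N + 1)) =>
    if (j : ℕ) + 1 = (i : ℕ) then ((i : ℕ) : ℂ) / 2
    else if (i : ℕ) + 1 = (j : ℕ) then ((N : ℂ) - ((i : ℕ) : ℂ)) / 2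
    else 0

/-- The solution `F_j(y) = (√y)^j (√(1−y))^{N−j} v`. -/
noncomputable def Fsol (N j : ℕ) (v : Fin (N + 1) → ℂ) (y : ℝ) : Fin (N + 1) → ℂ :=
  (((Real.sqrt y ^ j * Real.sqrt (1 - y) ^ (N - j) : ℝ)) : ℂ) • v

lemma aux_pow_deriv (j : ℕ) {x : ℝ} (hx : 0 < x) :
    (j:ℝ) * Real.sqrt x ^ (j-1) * (1/(2*Real.sqrt x)) = ((j:ℝ)/(2*x)) * Real.sqrt x ^ j := by
  rcases j with _|k
  · simp
  · have hs : Real.sqrt x ≠ 0 := ne_of_gt (Real.sqrt_pos.2 hx)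
    have hx2 : Real.sqrt x * Real.sqrt x = x := Real.mul_self_sqrt hx.le
    rw [pow_succ, Nat.succ_sub_one]
    field_simp
    linear_combination -hx2

lemma phi_hasDerivAt (N j : ℕ) {y : ℝ} (hy0 : 0 < y) (hy1 : y < 1) :
    HasDerivAt (fun t : ℝ => Real.sqrt t ^ j * Real.sqrt (1 - t) ^ (N - j))
      (((j:ℝ)/(2*y) - ((N-j:ℕ):ℝ)/(2*(1-y))) * (Real.sqrt y ^ j * Real.sqrt (1 - y) ^ (N - j)))
      y := by
  have h1y : (0:ℝ) < 1 - y := by linarith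
  have hA : HasDerivAt (fun t : ℝ => Real.sqrt t ^ j)
      ((j:ℝ) * Real.sqrt y ^ (j-1) * (1/(2*Real.sqrt y))) y :=
    (Real.hasDerivAt_sqrt hy0.ne').pow j
  have hinner : HasDerivAt (fun t : ℝ => 1 - t) (-1) y := by
    simpa using (hasDerivAt_id y).const_sub 1
  have hB0 : HasDerivAt (fun t : ℝ => Real.sqrt (1 - t)) (1/(2*Real.sqrt (1-y)) * (-1)) y :=
    (Real.hasDerivAt_sqrt h1y.ne').comp y hinner
  have hB : HasDerivAt (fun t : ℝ => Real.sqrt (1 - t) ^ (N-j))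
      (((N-j:ℕ):ℝ) * Real.sqrt (1-y) ^ (N-j-1) * (1/(2*Real.sqrt (1-y)) * (-1))) y :=
    hB0.pow (N-j)
  have H := hA.mul hB
  refine H.congr_deriv ?_
  rw [aux_pow_deriv j hy0]
  have h3 : ((N-j:ℕ):ℝ) * Real.sqrt (1-y) ^ (N-j-1) * (1/(2*Real.sqrt (1-y)) * (-1))
      = -((((N-j:ℕ)):ℝ)/(2*(1-y)) * Real.sqrt (1-y) ^ (N-j)) := by
    rw [← aux_pow_deriv (N-j) h1y]; ring
  rw [h3]; ring

noncomputable def phiC (N j : ℕ) (y : ℝ) : ℂ :=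
  ((Real.sqrt y ^ j * Real.sqrt (1 - y) ^ (N - j) : ℝ) : ℂ)

lemma phiC_hasDerivAt (N j : ℕ) {y : ℝ} (hy0 : 0 < y) (hy1 : y < 1) :
    HasDerivAt (phiC N j)
      (((j:ℂ)/(2*(y:ℂ)) - ((N-j:ℕ):ℂ)/(2*(1-(y:ℂ)))) * phiC N j y) y := by
  have H := (phi_hasDerivAt N j hy0 hy1).ofReal_comp (z := y)
  refine H.congr_deriv ?_
  unfold phiC
  push_cast
  ring

lemma phiC_ne_zero (N j : ℕ) {y : ℝ} (hy0 : 0 < y) (hy1 : y < 1) : phiC N j y ≠ 0 := by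
  unfold phiC
  rw [Complex.ofReal_ne_zero]
  have h1 : Real.sqrt y ≠ 0 := Real.sqrt_ne_zero'.2 hy0
  have h2 : Real.sqrt (1-y) ≠ 0 := Real.sqrt_ne_zero'.2 (by linarith)
  exact mul_ne_zero (pow_ne_zero _ h1) (pow_ne_zero _ h2)

lemma scalar_sol (N j : ℕ) (hj : j ≤ N) (g g' : ℝ → ℂ)
    (hg : ∀ y ∈ Set.Ioo (0:ℝ) 1, HasDerivAt g (g' y) y)
    (hode : ∀ y ∈ Set.Ioo (0:ℝ) 1,
      (y:ℂ)*(1-(y:ℂ)) * g' y + (1/2) * (((N:ℂ)*(y:ℂ) - (j:ℂ)) * g y) = 0) :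
    ∀ y ∈ Set.Ioo (0:ℝ) 1, g y = (g (1/2) / phiC N j (1/2)) * phiC N j y := by
  set h : ℝ → ℂ := fun y => g y / phiC N j y with hh
  have hcast : ((N-j:ℕ):ℂ) = (N:ℂ) - (j:ℂ) := by push_cast [Nat.cast_sub hj]; ring
  have hder : ∀ y ∈ Set.Ioo (0:ℝ) 1, HasDerivAt h 0 y := by
    intro y hy
    obtain ⟨hy0, hy1⟩ := hy
    have hy0C : (y:ℂ) ≠ 0 := by exact_mod_cast hy0.ne'
    have h1yC : 1 - (y:ℂ) ≠ 0 := by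
      intro hcon
      have : (y:ℂ) = 1 := by linear_combination -hcon
      exact (by exact_mod_cast hy1.ne : (y:ℂ) ≠ 1) this
    have hφ := phiC_hasDerivAt N j hy0 hy1
    have hφne := phiC_ne_zero N j hy0 hy1
    have hdiv := (hg y ⟨hy0, hy1⟩).div hφ hφne
    have hg' : g' y = (((j:ℂ) - (N:ℂ)*(y:ℂ))/(2*(y:ℂ)*(1-(y:ℂ)))) * g y := by
      have h0 := hode y ⟨hy0, hy1⟩
      field_simp
      linear_combination 2 * h0
    have hzero : (g' y * phiC N j y -
        g y * (((j:ℂ)/(2*(y:ℂ)) - ((N-j:ℕ):ℂ)/(2*(1-(y:ℂ)))) * phiC N j y)) / phiC N j y ^ 2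
        = 0 := by
      rw [hg', hcast]
      field_simp
      ring
    rw [← hzero]
    exact hdiv
  have hconst : ∀ y ∈ Set.Ioo (0:ℝ) 1, h y = h (1/2) := by
    intro y hy
    have hdiffOn : DifferentiableOn ℝ h (Set.Ioo (0:ℝ) 1) :=
      fun x hx => ((hder x hx).differentiableAt).differentiableWithinAt
    have hfd : ∀ x ∈ Set.Ioo (0:ℝ) 1, fderivWithin ℝ h (Set.Ioo (0:ℝ) 1) x = 0 := by
      intro x hx
      have := (hder x hx).hasFDerivAt
      rw [this.hasFDerivWithinAt.fderivWithin (isOpen_Ioo.uniqueDiffWithinAt hx)]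
      ext
      simp
    exact (convex_Ioo (0:ℝ) 1).is_const_of_fderivWithin_eq_zero hdiffOn hfd hy
      (by constructor <;> norm_num)
  intro y hy
  have h1 := hconst y hy
  have hφne := phiC_ne_zero N j hy.1 hy.2
  have : g y / phiC N j y = g (1/2) / phiC N j (1/2) := h1
  field_simp at this ⊢
  linear_combination this

lemma stmt18_part1 (N : ℕ) : ∀ j : ℕ, j ≤ N → ∀ v : Fin (N + 1) → ℂ,
      (Smat N).mulVec v = ((N : ℂ) / 2 - (j : ℂ)) • v →
      ∀ y ∈ Set.Ioo (0:ℝ) 1,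
        ((y : ℂ) * (1 - (y : ℂ))) • vderiv (Fsol N j v) y
          + (1 / 2 : ℂ) • ((Smat N - ((N : ℂ) / 2) • (1 : Matrix (Fin (N + 1)) (Fin (N + 1)) ℂ)
              + ((N : ℂ) * (y : ℂ)) • (1 : Matrix (Fin (N + 1)) (Fin (N + 1)) ℂ)).mulVec
                (Fsol N j v y))
          = 0 := by
  intro j hj v hv y hy
  obtain ⟨hy0, hy1⟩ := hy
  have hy0C : (y:ℂ) ≠ 0 := by exact_mod_cast hy0.ne'
  have h1yC : 1 - (y:ℂ) ≠ 0 := by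
    intro h
    have : (y:ℂ) = 1 := by linear_combination -h
    exact (by exact_mod_cast hy1.ne : (y:ℂ) ≠ 1) this
  set D : ℂ := ((j:ℂ)/(2*(y:ℂ)) - ((N-j:ℕ):ℂ)/(2*(1-(y:ℂ)))) * phiC N j y with hD
  have hderiv : vderiv (Fsol N j v) y = D • v := by
    funext i
    have h1 : (fun t => Fsol N j v t i) = fun t => phiC N j t * v i := rfl
    show deriv (fun t => Fsol N j v t i) y = D * v i
    rw [h1, ((phiC_hasDerivAt N j hy0 hy1).mul_const (v i)).deriv]
  have hF : Fsol N j v y = phiC N j y • v := rfl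
  have hM : (Smat N - ((N : ℂ) / 2) • (1 : Matrix (Fin (N + 1)) (Fin (N + 1)) ℂ)
      + ((N : ℂ) * (y : ℂ)) • (1 : Matrix (Fin (N + 1)) (Fin (N + 1)) ℂ)).mulVec v
      = (((N:ℂ)*y - j)) • v := by
    rw [add_mulVec, sub_mulVec, smul_mulVec, smul_mulVec, one_mulVec, hv]
    module
  have hcoef : (y:ℂ) * (1 - (y:ℂ)) * D + (1/2) * (phiC N j y * ((N:ℂ)*y - j)) = 0 := by
    rw [hD]
    have hc : ((N-j:ℕ):ℂ) = (N:ℂ) - (j:ℂ) := by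
      push_cast [Nat.cast_sub hj]; ring
    rw [hc]
    field_simp
    ring
  rw [hderiv, hF, mulVec_smul, hM]
  simp only [smul_smul, ← add_smul]
  convert zero_smul ℂ (A := Fin (N+1) → ℂ) v using 2

lemma stmt18_part2 (N : ℕ) : (∀ v : Fin (N + 1) → (Fin (N + 1) → ℂ),
        (∀ j : Fin (N + 1), v j ≠ 0) →
        (∀ j : Fin (N + 1), (Smat N).mulVec (v j) = ((N : ℂ) / 2 - ((j : ℕ) : ℂ)) • v j) →
        ((∀ c : Fin (N + 1) → ℂ,
          (∀ y ∈ Set.Ioo (0:ℝ) 1, ∑ j : Fin (N + 1), c j • Fsol N (j : ℕ) (v j) y = 0) →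
          ∀ j, c j = 0)
        ∧ (∀ G : ℝ → (Fin (N + 1) → ℂ),
            (∀ (i : Fin (N + 1)), ∀ y ∈ Set.Ioo (0:ℝ) 1,
              DifferentiableAt ℝ (fun t => G t i) y) →
            (∀ y ∈ Set.Ioo (0:ℝ) 1,
              ((y : ℂ) * (1 - (y : ℂ))) • vderiv G y
                + (1 / 2 : ℂ) • ((Smat N
                    - ((N : ℂ) / 2) • (1 : Matrix (Fin (N + 1)) (Fin (N + 1)) ℂ)
                    + ((N : ℂ) * (y : ℂ)) • (1 : Matrix (Fin (N + 1)) (Fin (N + 1)) ℂ)).mulVec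
                      (G y))
                = 0) →
            ∃ c : Fin (N + 1) → ℂ,
              ∀ y ∈ Set.Ioo (0:ℝ) 1,
                G y = ∑ j : Fin (N + 1), c j • Fsol N (j : ℕ) (v j) y))) := by
  intro v hvne hEig
  -- eigenvalues
  set lam : Fin (N+1) → ℂ := fun j => (N : ℂ) / 2 - ((j : ℕ) : ℂ) with hlam
  have hlaminj : Function.Injective lam := by
    intro a b h
    have h2 : ((a:ℕ):ℂ) = ((b:ℕ):ℂ) := by
      simp only [hlam] at h
      linear_combination -h
    have h3 : (a:ℕ) = (b:ℕ) := by exact_mod_cast h2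
    exact Fin.ext h3
  have hli : LinearIndependent ℂ v := by
    apply Module.End.eigenvectors_linearIndependent' ((Smat N).mulVecLin) lam hlaminj v
    intro i
    refine ⟨Module.End.mem_eigenspace_iff.2 ?_, hvne i⟩
    simpa [Matrix.mulVecLin_apply] using hEig i
  have hmem : (0:ℝ) < 1/2 ∧ (1/2:ℝ) < 1 := by norm_num
  have hhalf : (1/2 : ℝ) ∈ Set.Ioo (0:ℝ) 1 := ⟨hmem.1, hmem.2⟩
  constructor
  · -- linear independence
    intro c hc j
    have h := hc (1/2) hhalf
    have h2 : ∑ k : Fin (N+1), (c k * phiC N (k:ℕ) (1/2)) • v k = 0 := by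
      rw [← h]
      congr 1
      funext k
      rw [← smul_smul]
      rfl
    have h3 := (Fintype.linearIndependent_iff.1 hli) (fun k => c k * phiC N (k:ℕ) (1/2)) h2 j
    have hφ := phiC_ne_zero N (j:ℕ) hmem.1 hmem.2
    exact (mul_eq_zero.1 h3).resolve_right hφ
  · -- spanning
    intro G hGdiff hODE
    have hcard : Fintype.card (Fin (N+1)) = Module.finrank ℂ (Fin (N+1) → ℂ) := by
      simp [Module.finrank_fintype_fun_eq_card]
    set b := basisOfLinearIndependentOfCardEqFinrank hli hcard with hb
    have hbcoe : ∀ k, b k = v k := fun k => by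
      rw [hb, coe_basisOfLinearIndependentOfCardEqFinrank]
    -- eigen projection
    have hproj : ∀ (jj : Fin (N+1)) (w : Fin (N+1) → ℂ),
        b.repr ((Smat N).mulVec w) jj = lam jj * b.repr w jj := by
      intro jj w
      have h1 : (Smat N).mulVec w = ∑ k, (lam k * b.repr w k) • b k := by
        conv_lhs => rw [← b.sum_repr w]
        rw [← Matrix.mulVecLin_apply, map_sum]
        congr 1
        funext k
        rw [_root_.map_smul, Matrix.mulVecLin_apply, hbcoe k, hEig k, smul_smul, mul_comm]
      rw [h1, map_sum]
      classical
      simp only [_root_.map_smul, Finsupp.smul_apply, Module.Basis.repr_self_apply, smul_eq_mul,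
        Finsupp.coe_finset_sum, Finset.sum_apply]
      rw [Finset.sum_eq_single jj]
      · simp
      · intro k _ hk
        simp [hk]
      · intro hk
        exact absurd (Finset.mem_univ jj) hk
    -- derivative of G
    have hG' : ∀ y ∈ Set.Ioo (0:ℝ) 1, HasDerivAt G (vderiv G y) y := by
      intro y hy
      exact hasDerivAt_pi.2 (fun i => (hGdiff i y hy).hasDerivAt)
    -- coordinates
    set ε : Fin (N+1) → ((Fin (N+1) → ℂ) →L[ℂ] ℂ) :=
      fun j => LinearMap.toContinuousLinearMap (b.coord j) with hε
    have hεapply : ∀ j w, ε j w = b.repr w j := fun j w => rfl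
    have hgder : ∀ (j : Fin (N+1)), ∀ y ∈ Set.Ioo (0:ℝ) 1,
        HasDerivAt (fun t => b.repr (G t) j) (b.repr (vderiv G y) j) y := by
      intro j y hy
      have := ((ε j).hasFDerivAt (x := G y)).restrictScalars ℝ |>.comp_hasDerivAt y (hG' y hy)
      exact this
    -- coordinate ODE
    have hodej : ∀ (j : Fin (N+1)), ∀ y ∈ Set.Ioo (0:ℝ) 1,
        (y:ℂ)*(1-(y:ℂ)) * (b.repr (vderiv G y) j)
          + (1/2) * (((N:ℂ)*(y:ℂ) - ((j:ℕ):ℂ)) * (b.repr (G y) j)) = 0 := by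
      intro j y hy
      have h0 := hODE y hy
      rw [add_mulVec, sub_mulVec, smul_mulVec, smul_mulVec, one_mulVec] at h0
      have h1 := congrArg (fun w => b.repr w j) h0
      simp only [map_add, map_sub, _root_.map_smul, Finsupp.add_apply, Finsupp.sub_apply,
        Finsupp.smul_apply, smul_eq_mul, map_zero, Finsupp.coe_zero, Pi.zero_apply] at h1
      rw [hproj j (G y)] at h1
      simp only [hlam] at h1
      linear_combination h1
    -- apply scalar lemma
    refine ⟨fun j => b.repr (G (1/2)) j / phiC N (j:ℕ) (1/2), ?_⟩
    intro y hy
    have hcoord : ∀ j : Fin (N+1), b.repr (G y) j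
        = (b.repr (G (1/2)) j / phiC N (j:ℕ) (1/2)) * phiC N (j:ℕ) y := by
      intro j
      exact scalar_sol N (j:ℕ) (Fin.is_le j) (fun t => b.repr (G t) j)
        (fun t => b.repr (vderiv G t) j) (hgder j) (hodej j) y hy
    calc G y = ∑ j, b.repr (G y) j • b j := (b.sum_repr (G y)).symm
      _ = ∑ j : Fin (N+1), (b.repr (G (1/2)) j / phiC N (j:ℕ) (1/2)) • Fsol N (j:ℕ) (v j) y := by
          congr 1
          funext j
          rw [hcoord j, hbcoe j, ← smul_smul]
          rfl

/-- Proposition A.2 of the paper: (1) for an eigenvector `v` of `S`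
with eigenvalue `N/2 − j`, the function `F_j(y) = (√y)^j(√(1−y))^{N−j}v` solves
`y(1−y)F' + ½(S − (N/2)I + NyI)F = 0` on `(0,1)`; (2) for a family of nonzero
eigenvectors `v_j`, the `F_j` are linearly independent and span the solution space. -/
theorem stmt18 (N : ℕ) :
    -- (1)
    (∀ j : ℕ, j ≤ N → ∀ v : Fin (N + 1) → ℂ,
      (Smat N).mulVec v = ((N : ℂ) / 2 - (j : ℂ)) • v →
      ∀ y ∈ Set.Ioo (0:ℝ) 1,
        ((y : ℂ) * (1 - (y : ℂ))) • vderiv (Fsol N j v) y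
          + (1 / 2 : ℂ) • ((Smat N - ((N : ℂ) / 2) • (1 : Matrix (Fin (N + 1)) (Fin (N + 1)) ℂ)
              + ((N : ℂ) * (y : ℂ)) • (1 : Matrix (Fin (N + 1)) (Fin (N + 1)) ℂ)).mulVec
                (Fsol N j v y))
          = 0)
    -- (2)
    ∧ (∀ v : Fin (N + 1) → (Fin (N + 1) → ℂ),
        (∀ j : Fin (N + 1), v j ≠ 0) →
        (∀ j : Fin (N + 1), (Smat N).mulVec (v j) = ((N : ℂ) / 2 - ((j : ℕ) : ℂ)) • v j) →
        -- linear independence on (0,1)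
        ((∀ c : Fin (N + 1) → ℂ,
          (∀ y ∈ Set.Ioo (0:ℝ) 1, ∑ j : Fin (N + 1), c j • Fsol N (j : ℕ) (v j) y = 0) →
          ∀ j, c j = 0)
        -- every solution is a linear combination of the `F_j`
        ∧ (∀ G : ℝ → (Fin (N + 1) → ℂ),
            (∀ (i : Fin (N + 1)), ∀ y ∈ Set.Ioo (0:ℝ) 1,
              DifferentiableAt ℝ (fun t => G t i) y) →
            (∀ y ∈ Set.Ioo (0:ℝ) 1,
              ((y : ℂ) * (1 - (y : ℂ))) • vderiv G y
                + (1 / 2 : ℂ) • ((Smat N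
                    - ((N : ℂ) / 2) • (1 : Matrix (Fin (N + 1)) (Fin (N + 1)) ℂ)
                    + ((N : ℂ) * (y : ℂ)) • (1 : Matrix (Fin (N + 1)) (Fin (N + 1)) ℂ)).mulVec
                      (G y))
                = 0) →
            ∃ c : Fin (N + 1) → ℂ,
              ∀ y ∈ Set.Ioo (0:ℝ) 1,
                G y = ∑ j : Fin (N + 1), c j • Fsol N (j : ℕ) (v j) y))) := ⟨stmt18_part1 N, stmt18_part2 N⟩
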